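/- For natural numbers k ≥ 1, m, n with m ≥ 2k and n ≥ 2k, for Lebesgue-almost every matrix A ∈ ℝ^{m×n} the following holds: for all vectors x, z ∈ ℝ^n each having at most k nonzero entries, if |Ax| = |Az| entrywise, then z = x or z = -x. (Equivalently, the set of matrices A ∈ ℝ^{m×n} for which this recovery property fails has Lebesgue measure zero.) -/

import Mathlib

open MeasureTheory Finset

namespace SparsePR

/-- rank of `j` inside finset `S`: number of smaller elements. -/
def rk {N : ℕ} (S : Finset (Fin N)) (j : Fin N) : ℕ := (S.filter (· < j)).card

lemma rk_lt_card {N : ℕ} {S : Finset (Fin N)} {j : Fin N} (hj : j ∈ S) :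
    rk S j < S.card := by
  apply Finset.card_lt_card
  exact Finset.filter_ssubset.2 ⟨j, hj, by simp⟩

lemma rk_lt_rk {N : ℕ} {S : Finset (Fin N)} {j j' : Fin N} (hj : j ∈ S) (hj' : j' ∈ S)
    (h : j < j') : rk S j < rk S j' := by
  apply Finset.card_lt_card
  constructor
  · intro a ha
    simp only [Finset.mem_filter] at ha ⊢
    exact ⟨ha.1, lt_trans ha.2 h⟩
  · intro hsub
    have : j ∈ S.filter (· < j') := Finset.mem_filter.2 ⟨hj, h⟩
    have := hsub this
    simp at this

lemma rk_injOn {N : ℕ} {S : Finset (Fin N)} {j j' : Fin N} (hj : j ∈ S) (hj' : j' ∈ S)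
    (h : rk S j = rk S j') : j = j' := by
  rcases lt_trichotomy j j' with hlt | heq | hgt
  · exact absurd h (ne_of_lt (rk_lt_rk hj hj' hlt))
  · exact heq
  · exact absurd h.symm (ne_of_lt (rk_lt_rk hj' hj hgt))

end SparsePR

namespace SparsePR

/-- Parameter tuple for the covering maps. -/
structure Par (m n : ℕ) where
  S : Finset (Fin n)
  T : Finset (Fin n)
  I : Finset (Fin m)
  j0 : Fin n
  j1 : Fin n

instance (m n : ℕ) : Countable (Par m n) := by
  apply Function.Injective.countable
    (f := fun p : Par m n => (p.S, p.T, p.I, p.j0, p.j1))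
  rintro ⟨a,b,c,d,e⟩ ⟨a',b',c',d',e'⟩ h
  simp_all

variable {m n : ℕ}

/-- the column of the "overwritten" slot in row `i`. -/
def Par.slotCol (p : Par m n) (i : Fin m) : Fin n := if i ∈ p.I then p.j0 else p.j1

/-- read the slot entry in row `r` (as a natural number index, junk value if out of range). -/
def Par.read (p : Par m n) (B : Fin m → Fin n → ℝ) (r : ℕ) : ℝ :=
  if h : r < m then B ⟨r, h⟩ (p.slotCol ⟨r, h⟩) else 0

open Classical in
/-- the reconstructed (normalized) first sparse vector. -/
noncomputable def Par.xh (p : Par m n) (B : Fin m → Fin n → ℝ) (j : Fin n) : ℝ :=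
  if j ∈ p.S then (if j = p.j0 ∧ p.j0 ∉ p.T then 1 else p.read B (rk p.S j)) else 0

open Classical in
/-- the reconstructed (normalized) second sparse vector. -/
noncomputable def Par.zh (p : Par m n) (k : ℕ) (B : Fin m → Fin n → ℝ) (j : Fin n) : ℝ :=
  if j ∈ p.T then (if j = p.j0 then 1 - p.xh B p.j0 else p.read B (k + rk p.T j)) else 0

noncomputable def Par.d (p : Par m n) (k : ℕ) (B : Fin m → Fin n → ℝ) : ℝ :=
  p.xh B p.j1 - p.zh k B p.j1

open Classical in
/-- The covering map. -/
noncomputable def Par.G (p : Par m n) (k : ℕ) (B : Fin m → Fin n → ℝ) (i : Fin m) (j : Fin n) : ℝ :=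
  if i ∈ p.I then
    (if j = p.j0 then -∑ j' ∈ Finset.univ.erase p.j0, B i j' * (p.xh B j' + p.zh k B j')
     else B i j)
  else
    (if j = p.j1 then
       (if p.d k B = 0 then 0
        else -(∑ j' ∈ Finset.univ.erase p.j1, B i j' * (p.xh B j' - p.zh k B j')) / p.d k B)
     else B i j)

def Par.U (p : Par m n) (k : ℕ) : Set (Fin m → Fin n → ℝ) := {B | p.d k B ≠ 0}

end SparsePR

namespace SparsePR

variable {m n : ℕ}

lemma Par.read_eq (p : Par m n) {is : Fin m} {B B' : Fin m → Fin n → ℝ}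
    (hBB' : ∀ i j, (i ≠ is ∨ j ≠ p.slotCol is) → B i j = B' i j)
    {r : ℕ} (hr : r ≠ (is : ℕ)) : p.read B r = p.read B' r := by
  unfold Par.read
  split
  · next h =>
    apply hBB'
    left
    intro hc
    exact hr (by rw [← hc])
  · rfl

lemma Par.xh_eq (p : Par m n) {is : Fin m} {B B' : Fin m → Fin n → ℝ}
    (hBB' : ∀ i j, (i ≠ is ∨ j ≠ p.slotCol is) → B i j = B' i j)
    (hxrow : ∀ j ∈ p.S, ¬(j = p.j0 ∧ p.j0 ∉ p.T) → rk p.S j ≠ (is : ℕ)) :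
    ∀ j, p.xh B j = p.xh B' j := by
  intro j
  unfold Par.xh
  split
  · next hjS =>
    split
    · rfl
    · next hsp => exact p.read_eq hBB' (hxrow j hjS hsp)
  · rfl

lemma Par.zh_eq (p : Par m n) {k : ℕ} {is : Fin m} {B B' : Fin m → Fin n → ℝ}
    (hBB' : ∀ i j, (i ≠ is ∨ j ≠ p.slotCol is) → B i j = B' i j)
    (hxrow : ∀ j ∈ p.S, ¬(j = p.j0 ∧ p.j0 ∉ p.T) → rk p.S j ≠ (is : ℕ))
    (hzrow : ∀ j ∈ p.T, j ≠ p.j0 → k + rk p.T j ≠ (is : ℕ)) :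
    ∀ j, p.zh k B j = p.zh k B' j := by
  intro j
  unfold Par.zh
  split
  · next hjT =>
    split
    · next h => rw [p.xh_eq hBB' hxrow]
    · next h => exact p.read_eq hBB' (hzrow j hjT h)
  · rfl

lemma Par.G_eq (p : Par m n) {k : ℕ} {is : Fin m} {B B' : Fin m → Fin n → ℝ}
    (hBB' : ∀ i j, (i ≠ is ∨ j ≠ p.slotCol is) → B i j = B' i j)
    (hxrow : ∀ j ∈ p.S, ¬(j = p.j0 ∧ p.j0 ∉ p.T) → rk p.S j ≠ (is : ℕ))
    (hzrow : ∀ j ∈ p.T, j ≠ p.j0 → k + rk p.T j ≠ (is : ℕ)) :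
    p.G k B = p.G k B' := by
  have hxh := p.xh_eq hBB' hxrow
  have hzh := p.zh_eq hBB' hxrow hzrow
  have hd : p.d k B = p.d k B' := by unfold Par.d; rw [hxh, hzh]
  have hrow : ∀ (i : Fin m) (j' : Fin n), j' ≠ p.slotCol i → B i j' = B' i j' := by
    intro i j' hj'
    apply hBB'
    by_cases hi : i = is
    · right; rw [← hi]; exact hj'
    · left; exact hi
  funext i j
  unfold Par.G
  by_cases hi : i ∈ p.I
  · rw [if_pos hi, if_pos hi]
    have hcol : p.slotCol i = p.j0 := if_pos hi
    split
    · congr 1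
      apply Finset.sum_congr rfl
      intro j' hj'
      rw [hxh, hzh, hrow i j' (by rw [hcol]; exact (Finset.mem_erase.1 hj').1)]
    · next hj => exact hrow i j (by rw [hcol]; exact hj)
  · rw [if_neg hi, if_neg hi]
    have hcol : p.slotCol i = p.j1 := if_neg hi
    split
    · rw [hd]
      split
      · rfl
      · congr 1
        congr 1
        apply Finset.sum_congr rfl
        intro j' hj'
        rw [hxh, hzh, hrow i j' (by rw [hcol]; exact (Finset.mem_erase.1 hj').1)]
    · next hj => exact hrow i j (by rw [hcol]; exact hj)

end SparsePR

namespace SparsePR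

variable {m n : ℕ}

open Classical in
noncomputable def Par.iStar (p : Par m n) (k : ℕ) : ℕ :=
  if p.j0 ∈ p.T then k + rk p.T p.j0 else rk p.S p.j0

lemma Par.iStar_lt (p : Par m n) {k : ℕ} (hm : 2 * k ≤ m)
    (hS : p.S.card ≤ k) (hT : p.T.card ≤ k) (hj0 : p.j0 ∈ p.S ∪ p.T) :
    p.iStar k < m := by
  unfold Par.iStar
  split
  · next h => have := rk_lt_card h; omega
  · next h =>
    have hj0S : p.j0 ∈ p.S := by
      rcases Finset.mem_union.1 hj0 with h' | h'
      · exact h'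
      · exact absurd h' h
    have := rk_lt_card hj0S; omega

lemma Par.iStar_spec (p : Par m n) {k : ℕ} (hS : p.S.card ≤ k) (hT : p.T.card ≤ k)
    (hj0 : p.j0 ∈ p.S ∪ p.T) :
    (∀ j ∈ p.S, ¬(j = p.j0 ∧ p.j0 ∉ p.T) → rk p.S j ≠ p.iStar k) ∧
    (∀ j ∈ p.T, j ≠ p.j0 → k + rk p.T j ≠ p.iStar k) := by
  unfold Par.iStar
  by_cases hT0 : p.j0 ∈ p.T
  · rw [if_pos hT0]
    constructor
    · intro j hj _ 
      have := rk_lt_card hj; omega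
    · intro j hj hne heq
      exact hne (rk_injOn hj hT0 (by omega))
  · rw [if_neg hT0]
    have hj0S : p.j0 ∈ p.S := by
      rcases Finset.mem_union.1 hj0 with h' | h'
      · exact h'
      · exact absurd h' hT0
    constructor
    · intro j hj hsp heq
      exact hsp ⟨rk_injOn hj hj0S heq, hT0⟩
    · intro j hj _ heq
      have := rk_lt_card hj0S; omega

end SparsePR

namespace SparsePR

variable {m n : ℕ}

lemma diff_eval (i : Fin m) (j : Fin n) :
    Differentiable ℝ (fun B : Fin m → Fin n → ℝ => B i j) := by
  fun_prop

lemma Par.read_diff (p : Par m n) (r : ℕ) :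
    Differentiable ℝ (fun B : Fin m → Fin n → ℝ => p.read B r) := by
  unfold Par.read
  split
  · exact diff_eval _ _
  · exact differentiable_const _

lemma Par.xh_diff (p : Par m n) (j : Fin n) :
    Differentiable ℝ (fun B : Fin m → Fin n → ℝ => p.xh B j) := by
  unfold Par.xh
  split
  · split
    · exact differentiable_const _
    · exact p.read_diff _
  · exact differentiable_const _

lemma Par.zh_diff (p : Par m n) (k : ℕ) (j : Fin n) :
    Differentiable ℝ (fun B : Fin m → Fin n → ℝ => p.zh k B j) := by
  unfold Par.zh
  split
  · split
    · exact (differentiable_const _).sub (p.xh_diff _)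
    · exact p.read_diff _
  · exact differentiable_const _

lemma Par.d_diff (p : Par m n) (k : ℕ) :
    Differentiable ℝ (fun B : Fin m → Fin n → ℝ => p.d k B) := by
  unfold Par.d
  exact (p.xh_diff _).sub (p.zh_diff _ _)

lemma Par.U_open (p : Par m n) (k : ℕ) : IsOpen (p.U k) := by
  have : p.U k = (fun B => p.d k B) ⁻¹' {(0:ℝ)}ᶜ := rfl
  rw [this]
  exact (isOpen_compl_singleton).preimage (p.d_diff k).continuous

lemma Par.G_diffAt (p : Par m n) (k : ℕ) {B : Fin m → Fin n → ℝ} (hB : B ∈ p.U k) :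
    DifferentiableAt ℝ (p.G k) B := by
  rw [differentiableAt_pi]
  intro i
  rw [differentiableAt_pi]
  intro j
  have hGij : ∀ C, p.G k C i j = p.G k C i j := fun _ => rfl
  by_cases hi : i ∈ p.I
  · by_cases hj : j = p.j0
    · have : (fun C => p.G k C i j)
          = fun C => -∑ j' ∈ Finset.univ.erase p.j0, C i j' * (p.xh C j' + p.zh k C j') := by
        funext C; unfold Par.G; rw [if_pos hi, if_pos hj]
      rw [this]
      apply DifferentiableAt.neg
      exact (Differentiable.fun_sum fun j' _ =>
        (diff_eval i j').mul ((p.xh_diff j').add (p.zh_diff k j'))).differentiableAt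
    · have : (fun C => p.G k C i j) = fun C => C i j := by
        funext C; unfold Par.G; rw [if_pos hi, if_neg hj]
      rw [this]
      exact (diff_eval i j).differentiableAt
  · by_cases hj : j = p.j1
    · have hev : (fun C => p.G k C i j)
          =ᶠ[nhds B] fun C =>
            -(∑ j' ∈ Finset.univ.erase p.j1, C i j' * (p.xh C j' - p.zh k C j')) * (p.d k C)⁻¹ := by
        filter_upwards [(p.U_open k).mem_nhds hB] with C hC
        unfold Par.G
        rw [if_neg hi, if_pos hj, if_neg hC, div_eq_mul_inv]
      rw [Filter.EventuallyEq.differentiableAt_iff hev]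
      have h1 : DifferentiableAt ℝ
          (fun C : Fin m → Fin n → ℝ =>
            -(∑ j' ∈ Finset.univ.erase p.j1, C i j' * (p.xh C j' - p.zh k C j'))) B :=
        (Differentiable.fun_sum fun j' _ =>
          (diff_eval i j').mul ((p.xh_diff j').sub (p.zh_diff k j'))).neg.differentiableAt
      have h2 : DifferentiableAt ℝ (fun C : Fin m → Fin n → ℝ => (p.d k C)⁻¹) B :=
        ((p.d_diff k).differentiableAt).inv hB
      exact h1.mul h2
    · have : (fun C => p.G k C i j) = fun C => C i j := by
        funext C; unfold Par.G; rw [if_neg hi, if_neg hj]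
      rw [this]
      exact (diff_eval i j).differentiableAt

end SparsePR

namespace SparsePR

variable {m n : ℕ}

open Classical in
/-- linear projection zeroing one matrix entry. -/
def proj (is : Fin m) (cs : Fin n) :
    (Fin m → Fin n → ℝ) →ₗ[ℝ] (Fin m → Fin n → ℝ) where
  toFun B := fun i j => if i = is ∧ j = cs then 0 else B i j
  map_add' B C := by
    funext i j
    by_cases h : i = is ∧ j = cs <;> simp [h]
  map_smul' c B := by
    funext i j
    by_cases h : i = is ∧ j = cs <;> simp [h]

lemma proj_not_injective (is : Fin m) (cs : Fin n) :
    ¬ Function.Injective (proj is cs) := by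
  classical
  intro hinj
  have h1 : proj is cs (fun i j => if i = is ∧ j = cs then (1:ℝ) else 0) = proj is cs 0 := by
    funext i j
    by_cases h : i = is ∧ j = cs <;> simp [proj, h]
  have := hinj h1
  have h2 := congrFun (congrFun this is) cs
  simp at h2

lemma det_eq_zero_of_not_injective {M : Type*} [AddCommGroup M] [Module ℝ M]
    [FiniteDimensional ℝ M] (f : M →ₗ[ℝ] M) (h : ¬ Function.Injective f) :
    LinearMap.det f = 0 := by
  by_contra h0
  apply h
  have hinj := (f.equivOfDetNeZero h0).injective
  have hco : ⇑(f.equivOfDetNeZero h0) = ⇑f := by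
    funext x; rfl
  rwa [hco] at hinj

lemma Par.volume_image_eq_zero (p : Par m n) {k : ℕ} (hm : 2 * k ≤ m)
    (hS : p.S.card ≤ k) (hT : p.T.card ≤ k) (hj0 : p.j0 ∈ p.S ∪ p.T) :
    volume (p.G k '' p.U k) = 0 := by
  classical
  have hlt := p.iStar_lt hm hS hT hj0
  set is : Fin m := ⟨p.iStar k, hlt⟩ with his
  set cs : Fin n := p.slotCol is with hcs
  set π : (Fin m → Fin n → ℝ) →ₗ[ℝ] (Fin m → Fin n → ℝ) := proj is cs with hπ
  have hspec := p.iStar_spec (k := k) hS hT hj0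
  have hxrow : ∀ j ∈ p.S, ¬(j = p.j0 ∧ p.j0 ∉ p.T) → rk p.S j ≠ (is : ℕ) := hspec.1
  have hzrow : ∀ j ∈ p.T, j ≠ p.j0 → k + rk p.T j ≠ (is : ℕ) := hspec.2
  have hBB' : ∀ B : Fin m → Fin n → ℝ, ∀ i j, (i ≠ is ∨ j ≠ p.slotCol is) →
      π B i j = B i j := by
    intro B i j hij
    show (if i = is ∧ j = cs then (0:ℝ) else B i j) = B i j
    rw [if_neg]
    rintro ⟨h1, h2⟩
    rcases hij with h | h
    · exact h h1
    · exact h (h2.trans hcs.symm ▸ h2)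
  have hGπ : ∀ B, p.G k (π B) = p.G k B :=
    fun B => p.G_eq (hBB' B) hxrow hzrow
  have hdπ : ∀ B, p.d k (π B) = p.d k B := by
    intro B
    unfold Par.d
    rw [p.xh_eq (hBB' B) hxrow p.j1, p.zh_eq (hBB' B) hxrow hzrow p.j1]
  apply addHaar_image_eq_zero_of_det_fderivWithin_eq_zero
    (f' := fun B => fderiv ℝ (p.G k) B)
  · intro B hB
    exact ((p.G_diffAt k hB).hasFDerivAt).hasFDerivWithinAt
  · intro B hB
    have hπB : π B ∈ p.U k := by
      show p.d k (π B) ≠ 0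
      rw [hdπ]
      exact hB
    have hGcomp : p.G k = (p.G k) ∘ ⇑(LinearMap.toContinuousLinearMap π) := by
      funext B'
      show p.G k B' = p.G k (LinearMap.toContinuousLinearMap π B')
      rw [show (LinearMap.toContinuousLinearMap π) B' = π B' from rfl, hGπ]
    have hcomp : fderiv ℝ (p.G k) B
        = (fderiv ℝ (p.G k) (π B)).comp (LinearMap.toContinuousLinearMap π) := by
      conv_lhs => rw [hGcomp]
      rw [fderiv_comp B (p.G_diffAt k (by
          show p.d k ((LinearMap.toContinuousLinearMap π) B) ≠ 0
          exact hπB))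
        (LinearMap.toContinuousLinearMap π).differentiableAt]
      rw [(LinearMap.toContinuousLinearMap π).fderiv]
      rfl
    rw [hcomp]
    show LinearMap.det ((fderiv ℝ (p.G k) (π B) : _ →ₗ[ℝ] _).comp π) = 0
    rw [LinearMap.det_comp,
      det_eq_zero_of_not_injective π (proj_not_injective is cs), mul_zero]

end SparsePR

namespace SparsePR

variable {m n : ℕ}

lemma cover {k : ℕ} (hm : 2 * k ≤ m)
    {A : Fin m → Fin n → ℝ} {x z : Fin n → ℝ}
    (hx : (Function.support x).ncard ≤ k) (hz : (Function.support z).ncard ≤ k)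
    (hmeas : ∀ i, |∑ j, A i j * x j| = |∑ j, A i j * z j|)
    (hzx : z ≠ x) (hzx' : z ≠ -x) :
    ∃ p : Par m n, p.S.card ≤ k ∧ p.T.card ≤ k ∧ p.j0 ∈ p.S ∪ p.T ∧
      A ∈ p.G k '' p.U k := by
  classical
  set S : Finset (Fin n) := Finset.univ.filter (fun j => x j ≠ 0) with hSdef
  set T : Finset (Fin n) := Finset.univ.filter (fun j => z j ≠ 0) with hTdef
  have hSsupp : (S : Set (Fin n)) = Function.support x := by
    ext j; simp [hSdef, Function.mem_support]
  have hTsupp : (T : Set (Fin n)) = Function.support z := by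
    ext j; simp [hTdef, Function.mem_support]
  have hScard : S.card ≤ k := by
    rw [← Set.ncard_coe_finset S, hSsupp]; exact hx
  have hTcard : T.card ≤ k := by
    rw [← Set.ncard_coe_finset T, hTsupp]; exact hz
  have hxS : ∀ j, j ∉ S → x j = 0 := by
    intro j hj; by_contra h; exact hj (by simp [hSdef, h])
  have hzT : ∀ j, j ∉ T → z j = 0 := by
    intro j hj; by_contra h; exact hj (by simp [hTdef, h])
  -- choose coordinates where x+z and x-z do not vanish
  obtain ⟨j0, hj0⟩ : ∃ j, x j + z j ≠ 0 := by
    by_contra h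
    push_neg at h
    exact hzx' (funext fun j => by have := h j; simp [Pi.neg_apply]; linarith)
  obtain ⟨j1, hj1⟩ : ∃ j, x j - z j ≠ 0 := by
    by_contra h
    push_neg at h
    exact hzx (funext fun j => by have := h j; linarith)
  set I : Finset (Fin m) := Finset.univ.filter (fun i => ∑ j, A i j * (x j + z j) = 0) with hIdef
  have hio : ∀ i, i ∉ I → ∑ j, A i j * (x j - z j) = 0 := by
    intro i hi
    have hsum : ∑ j, A i j * (x j + z j) ≠ 0 := by
      intro h; exact hi (by simp [hIdef, h])
    have hadd : ∑ j, A i j * (x j + z j) = (∑ j, A i j * x j) + ∑ j, A i j * z j := by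
      rw [← Finset.sum_add_distrib]
      exact Finset.sum_congr rfl fun j _ => by ring
    have hsub : ∑ j, A i j * (x j - z j) = (∑ j, A i j * x j) - ∑ j, A i j * z j := by
      rw [← Finset.sum_sub_distrib]
      exact Finset.sum_congr rfl fun j _ => by ring
    rcases abs_eq_abs.1 (hmeas i) with h | h
    · rw [hsub, h, sub_self]
    · exfalso; apply hsum; rw [hadd, h]; ring
  set p : Par m n := ⟨S, T, I, j0, j1⟩ with hpdef
  have hkm : k ≤ m := by omega
  set c : ℝ := (x j0 + z j0)⁻¹ with hcdef
  have hc : c ≠ 0 := inv_ne_zero hj0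
  have hc1 : c * (x j0 + z j0) = 1 := inv_mul_cancel₀ hj0
  -- the lifted point
  set store : Fin m → ℝ := fun i =>
    if h : ∃ js, js ∈ S ∧ rk S js = (i : ℕ) then c * x h.choose
    else if h' : ∃ jt, jt ∈ T ∧ k + rk T jt = (i : ℕ) then c * z h'.choose
    else A i (p.slotCol i) with hstoredef
  set B : Fin m → Fin n → ℝ :=
    fun i j => if j = p.slotCol i then store i else A i j with hBdef
  have hBoff : ∀ i j, j ≠ p.slotCol i → B i j = A i j := by
    intro i j hj; simp only [hBdef]; rw [if_neg hj]
  have hread_x : ∀ j ∈ S, p.read B (rk S j) = c * x j := by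
    intro j hj
    have hr : rk S j < m := lt_of_lt_of_le (lt_of_lt_of_le (rk_lt_card hj) hScard) hkm
    unfold Par.read
    rw [dif_pos hr]
    simp only [hBdef]
    rw [if_pos trivial]
    simp only [hstoredef]
    have hex : ∃ js, js ∈ S ∧ rk S js = ((⟨rk S j, hr⟩ : Fin m) : ℕ) := ⟨j, hj, rfl⟩
    rw [dif_pos hex]
    have hspec := hex.choose_spec
    have : hex.choose = j := rk_injOn hspec.1 hj hspec.2
    rw [this]
  have hread_z : ∀ j ∈ T, p.read B (k + rk T j) = c * z j := by
    intro j hj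
    have hr : k + rk T j < m := by have := rk_lt_card hj; omega
    unfold Par.read
    rw [dif_pos hr]
    simp only [hBdef]
    rw [if_pos trivial]
    simp only [hstoredef]
    have hnex : ¬ ∃ js, js ∈ S ∧ rk S js = ((⟨k + rk T j, hr⟩ : Fin m) : ℕ) := by
      rintro ⟨js, hjs, hrk⟩
      have := rk_lt_card hjs
      simp only [Fin.val_mk] at hrk
      omega
    rw [dif_neg hnex]
    have hex : ∃ jt, jt ∈ T ∧ k + rk T jt = ((⟨k + rk T j, hr⟩ : Fin m) : ℕ) := ⟨j, hj, rfl⟩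
    rw [dif_pos hex]
    have hspec := hex.choose_spec
    have heq : rk T hex.choose = rk T j := by
      have := hspec.2; simp only [Fin.val_mk] at this; omega
    have : hex.choose = j := rk_injOn hspec.1 hj heq
    rw [this]
  have hxh : ∀ j, p.xh B j = c * x j := by
    intro j
    unfold Par.xh
    by_cases hj : j ∈ p.S
    · rw [if_pos hj]
      by_cases hsp : j = p.j0 ∧ p.j0 ∉ p.T
      · rw [if_pos hsp]
        have hz0 : z j0 = 0 := hzT j0 hsp.2
        have hx0 : x j0 ≠ 0 := by intro h; apply hj0; rw [h, hz0, add_zero]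
        rw [hsp.1]
        show (1 : ℝ) = c * x j0
        rw [hcdef, hz0, add_zero]
        field_simp
      · rw [if_neg hsp]
        exact hread_x j hj
    · rw [if_neg hj]
      rw [hxS j hj, mul_zero]
  have hzh : ∀ j, p.zh k B j = c * z j := by
    intro j
    unfold Par.zh
    by_cases hj : j ∈ p.T
    · rw [if_pos hj]
      by_cases hj0' : j = p.j0
      · rw [if_pos hj0', hxh p.j0, hj0']
        show (1 : ℝ) - c * x j0 = c * z j0
        have h1 : c * x j0 + c * z j0 = 1 := by rw [← hc1]; ring
        linarith
      · rw [if_neg hj0']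
        exact hread_z j hj
    · rw [if_neg hj]
      rw [hzT j hj, mul_zero]
  have hd : p.d k B = c * (x j1 - z j1) := by
    unfold Par.d
    rw [hxh, hzh]
    show c * x j1 - c * z j1 = c * (x j1 - z j1)
    ring
  have hdne : p.d k B ≠ 0 := by
    rw [hd]; exact mul_ne_zero hc hj1
  have hGB : p.G k B = A := by
    funext i j
    unfold Par.G
    by_cases hi : i ∈ p.I
    · have hslot : p.slotCol i = p.j0 := if_pos hi
      rw [if_pos hi]
      by_cases hj : j = p.j0
      · rw [if_pos hj]
        have hterm : ∀ j' ∈ Finset.univ.erase p.j0,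
            B i j' * (p.xh B j' + p.zh k B j') = A i j' * (c * (x j' + z j')) := by
          intro j' hj'
          rw [hBoff i j' (by rw [hslot]; exact (Finset.mem_erase.1 hj').1), hxh, hzh]
          ring
        rw [Finset.sum_congr rfl hterm]
        have htot : ∑ j', A i j' * (c * (x j' + z j')) = 0 := by
          have hIi : ∑ j', A i j' * (x j' + z j') = 0 := by
            have := (Finset.mem_filter.1 hi).2
            exact this
          calc ∑ j', A i j' * (c * (x j' + z j'))
              = c * ∑ j', A i j' * (x j' + z j') := by
                rw [Finset.mul_sum]
                exact Finset.sum_congr rfl fun j' _ => by ring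
            _ = 0 := by rw [hIi, mul_zero]
        rw [Finset.sum_erase_eq_sub (Finset.mem_univ p.j0), htot]
        show -(0 - A i p.j0 * (c * (x p.j0 + z p.j0))) = A i j
        have : x p.j0 + z p.j0 = x j0 + z j0 := rfl
        rw [this, hj]
        show -(0 - A i p.j0 * (c * (x j0 + z j0))) = A i p.j0
        rw [hc1]
        ring
      · rw [if_neg hj]
        exact hBoff i j (by rw [hslot]; exact hj)
    · have hslot : p.slotCol i = p.j1 := if_neg hi
      rw [if_neg hi]
      by_cases hj : j = p.j1
      · rw [if_pos hj, if_neg hdne]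
        have hterm : ∀ j' ∈ Finset.univ.erase p.j1,
            B i j' * (p.xh B j' - p.zh k B j') = A i j' * (c * (x j' - z j')) := by
          intro j' hj'
          rw [hBoff i j' (by rw [hslot]; exact (Finset.mem_erase.1 hj').1), hxh, hzh]
          ring
        rw [Finset.sum_congr rfl hterm]
        have htot : ∑ j', A i j' * (c * (x j' - z j')) = 0 := by
          calc ∑ j', A i j' * (c * (x j' - z j'))
              = c * ∑ j', A i j' * (x j' - z j') := by
                rw [Finset.mul_sum]
                exact Finset.sum_congr rfl fun j' _ => by ring
            _ = 0 := by rw [hio i hi, mul_zero]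
        rw [Finset.sum_erase_eq_sub (Finset.mem_univ p.j1), htot, hd]
        show -(0 - A i p.j1 * (c * (x p.j1 - z p.j1))) / (c * (x j1 - z j1)) = A i j
        have hpj1 : p.j1 = j1 := rfl
        rw [hpj1, hj, hpj1]
        have hcd : c * (x j1 - z j1) ≠ 0 := mul_ne_zero hc hj1
        field_simp
        ring
      · rw [if_neg hj]
        exact hBoff i j (by rw [hslot]; exact hj)
  refine ⟨p, hScard, hTcard, ?_, ⟨B, hdne, hGB⟩⟩
  show j0 ∈ S ∪ T
  by_contra h
  rw [Finset.mem_union] at h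
  push_neg at h
  exact hj0 (by rw [hxS j0 h.1, hzT j0 h.2, add_zero])

end SparsePR

/-- For `m ≥ 2k` and `n ≥ 2k`, Lebesgue-almost every real `m × n` matrix `A` has the
property that any two `k`-sparse vectors with the same phaseless measurements `|Ax| = |Az|`
agree up to global sign. -/
theorem sparse_phase_retrieval_real_ae (k m n : ℕ) (hk : 1 ≤ k)
    (hm : 2 * k ≤ m) (hn : 2 * k ≤ n) :
    ∀ᵐ A : Fin m → Fin n → ℝ, ∀ x z : Fin n → ℝ,
      (Function.support x).ncard ≤ k →
      (Function.support z).ncard ≤ k →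
      (∀ i, |(Matrix.of A).mulVec x i| = |(Matrix.of A).mulVec z i|) →
      z = x ∨ z = -x := by
  classical
  rw [MeasureTheory.ae_iff]
  have h0 : volume (⋃ q : {p : SparsePR.Par m n //
      p.S.card ≤ k ∧ p.T.card ≤ k ∧ p.j0 ∈ p.S ∪ p.T},
      q.1.G k '' q.1.U k) = 0 :=
    measure_iUnion_null fun q => q.1.volume_image_eq_zero hm q.2.1 q.2.2.1 q.2.2.2
  refine measure_mono_null ?_ h0
  intro A hA
  simp only [Set.mem_setOf_eq] at hA
  push_neg at hA
  obtain ⟨x, z, hx, hz, hmeas, hne1, hne2⟩ := hA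
  have hmeas' : ∀ i, |∑ j, A i j * x j| = |∑ j, A i j * z j| := by
    intro i
    simpa [Matrix.mulVec, dotProduct, Matrix.of_apply] using hmeas i
  obtain ⟨p, h1, h2, h3, h4⟩ := SparsePR.cover hm hx hz hmeas' hne1 hne2
  exact Set.mem_iUnion.2 ⟨⟨p, h1, h2, h3⟩, h4⟩
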